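/- (Lemma of Appendix C: block-Lipschitz constant of the graph objective with the proposed regularizer.) Assume μ₂ = μ₁ ≥ 0, λ > 0, δ > 0. Fix k ∈ [K] and 𝒦 ⊆ [K]\{k} with |𝒦| = κ ≥ 1, and let w, w' ∈ ℝ^{K(K−1)/2} with w ≥ 0 and w' ≥ 0 that agree on every coordinate outside the block {(k,l) : l ∈ 𝒦}. Then ‖[∇h(w)]_{k,𝒦} − [∇h(w')]_{k,𝒦}‖₂ ≤ μ₁·( (κ+1)/δ² + 2λ )·‖w_{k,𝒦} − w'_{k,𝒦}‖₂, where w_{k,𝒦} = (w_{k,l})_{l∈𝒦} and [∇h(w)]_{k,𝒦} is the subvector of the gradient of h on the coordinates {(k,l) : l ∈ 𝒦}. -/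

import Mathlib

open scoped BigOperators

/-- Coordinates are indexed by unordered pairs of distinct elements of `[K]`,
represented as ordered pairs `(i,j)` with `i < j`; there are `K(K−1)/2` of them. -/
abbrev PairIdx (K : ℕ) := {q : Fin K × Fin K // q.1 < q.2}

/-- Weight vectors live in `ℝ^{K(K−1)/2}` with the Euclidean structure. -/
abbrev GVec (K : ℕ) := EuclideanSpace ℝ (PairIdx K)

/-- Degree of user `k`: `d_k(w) = Σ_{l≠k} w_{k,l}`. -/
noncomputable def deg {K : ℕ} (w : GVec K) (k : Fin K) : ℝ :=
  ∑ q : PairIdx K, (if q.1.1 = k ∨ q.1.2 = k then w q else 0)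

/-- The graph objective
`h(w) = Σ_{k<l} w_{k,l}(p_{k,l} + (μ₁/2)Δ_{k,l}) + μ₂(λ‖w‖² − Σ_k log(d_k(w) + δ))`. -/
noncomputable def hObj {K : ℕ} (P Δ : Fin K → Fin K → ℝ) (μ₁ μ₂ lam δ : ℝ)
    (w : GVec K) : ℝ :=
  (∑ q : PairIdx K, w q * (P q.1.1 q.1.2 + μ₁ / 2 * Δ q.1.1 q.1.2))
    + μ₂ * (lam * (∑ q : PairIdx K, (w q) ^ 2)
        - ∑ k : Fin K, Real.log (deg w k + δ))

/-- The coordinate `{i,j}` belongs to the block `(k,𝒦)` iff it is of the form `{k,l}`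
with `l ∈ 𝒦`. -/
def inBlk {K : ℕ} (k : Fin K) (S : Finset (Fin K)) (q : PairIdx K) : Prop :=
  (q.1.1 = k ∧ q.1.2 ∈ S) ∨ (q.1.2 = k ∧ q.1.1 ∈ S)

instance {K : ℕ} (k : Fin K) (S : Finset (Fin K)) (q : PairIdx K) :
    Decidable (inBlk k S q) := by
  unfold inBlk; infer_instance

/-- Restriction of a vector to the coordinates of the block `(k,𝒦)` (zeroing the others),
so that its Euclidean norm is the ℓ2 norm of the subvector `[v]_{k,𝒦}`. -/
noncomputable def blkRestr {K : ℕ} (k : Fin K) (S : Finset (Fin K)) (v : GVec K) :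
    GVec K :=
  WithLp.toLp 2 (fun q => if inBlk k S q then v q else 0)

-- helper: two distinct endpoints determine the pair
lemma eq_of_touch {K : ℕ} {a b : Fin K} (hab : a ≠ b) {q q' : PairIdx K}
    (h1 : q.1.1 = a ∨ q.1.2 = a) (h2 : q.1.1 = b ∨ q.1.2 = b)
    (h1' : q'.1.1 = a ∨ q'.1.2 = a) (h2' : q'.1.1 = b ∨ q'.1.2 = b) : q = q' := by
  obtain ⟨⟨q1, q2⟩, hq⟩ := q
  obtain ⟨⟨q1', q2'⟩, hq'⟩ := q'
  simp only [Subtype.mk.injEq, Prod.mk.injEq] at *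
  rcases h1 with h | h <;> rcases h2 with g | g <;> rcases h1' with h' | h' <;>
    rcases h2' with g' | g' <;> subst_vars <;>
    first
      | exact ⟨rfl, rfl⟩
      | exact absurd rfl hab
      | exact absurd hq' (not_lt.mpr hq.le)
      | exact absurd hq (lt_irrefl _)
      | exact absurd hq' (lt_irrefl _)

lemma sum_ite_pair {K : ℕ} {a b : Fin K} (hab : a ≠ b) (f : Fin K → ℝ) :
    ∑ m : Fin K, (if a = m ∨ b = m then f m else 0) = f a + f b := by
  have : ∀ m : Fin K, (if a = m ∨ b = m then f m else 0)
      = (if a = m then f m else 0) + (if b = m then f m else 0) := by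
    intro m
    by_cases h1 : a = m <;> by_cases h2 : b = m <;> simp_all
  simp only [this, Finset.sum_add_distrib, Finset.sum_ite_eq, Finset.mem_univ, if_true]

lemma inv_diff_abs_le {a b δ : ℝ} (ha : 0 ≤ a) (hb : 0 ≤ b) (hδ : 0 < δ) :
    |(a + δ)⁻¹ - (b + δ)⁻¹| ≤ |a - b| / δ ^ 2 := by
  have ha' : 0 < a + δ := by linarith
  have hb' : 0 < b + δ := by linarith
  have heq : (a + δ)⁻¹ - (b + δ)⁻¹ = (b - a) / ((a + δ) * (b + δ)) := by
    field_simp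
    ring
  rw [heq, abs_div, abs_of_pos (by positivity : (0:ℝ) < (a + δ) * (b + δ))]
  have h1 : δ ^ 2 ≤ (a + δ) * (b + δ) := by nlinarith
  have h2 : |b - a| = |a - b| := abs_sub_comm b a
  rw [h2]
  exact div_le_div_of_nonneg_left (abs_nonneg _) (by positivity) h1

lemma norm_le_of_abs_le {ι : Type*} [Fintype ι] (x y : EuclideanSpace ℝ ι)
    (h : ∀ i, |x i| ≤ |y i|) : ‖x‖ ≤ ‖y‖ := by
  rw [EuclideanSpace.norm_eq, EuclideanSpace.norm_eq]
  apply Real.sqrt_le_sqrt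
  apply Finset.sum_le_sum
  intro i _
  rw [Real.norm_eq_abs, Real.norm_eq_abs]
  exact pow_le_pow_left₀ (abs_nonneg _) (h i) 2

lemma deg_nonneg {K : ℕ} {w : GVec K} (hw : ∀ q, 0 ≤ w q) (m : Fin K) : 0 ≤ deg w m := by
  apply Finset.sum_nonneg
  intro q _
  split
  · exact hw q
  · exact le_refl 0

/-- degree as a continuous linear map -/
noncomputable def degL (K : ℕ) (k : Fin K) : GVec K →L[ℝ] ℝ :=
  ∑ q : PairIdx K, if q.1.1 = k ∨ q.1.2 = k then EuclideanSpace.proj q else 0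

lemma degL_apply {K : ℕ} (k : Fin K) (v : GVec K) : degL K k v = deg v k := by
  simp [degL, deg, ContinuousLinearMap.sum_apply, apply_ite (fun (f : GVec K →L[ℝ] ℝ) => f v)]

noncomputable def gradVec {K : ℕ} (P Δ : Fin K → Fin K → ℝ) (μ₁ μ₂ lam δ : ℝ) (w : GVec K) :
    GVec K :=
  WithLp.toLp 2 (fun q => (P q.1.1 q.1.2 + μ₁ / 2 * Δ q.1.1 q.1.2)
    + μ₂ * (lam * (2 * w q)
      - ∑ k : Fin K, (if q.1.1 = k ∨ q.1.2 = k then (deg w k + δ)⁻¹ else 0)))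

lemma hasGradient_hObj {K : ℕ} (P Δ : Fin K → Fin K → ℝ) (μ₁ μ₂ lam δ : ℝ)
    (w : GVec K) (hpos : ∀ m : Fin K, deg w m + δ ≠ 0) :
    HasGradientAt (hObj P Δ μ₁ μ₂ lam δ) (gradVec P Δ μ₁ μ₂ lam δ w) w := by
  set c : PairIdx K → ℝ := fun q => P q.1.1 q.1.2 + μ₁ / 2 * Δ q.1.1 q.1.2 with hc
  have hA : HasFDerivAt (fun v : GVec K => ∑ q : PairIdx K, v q * c q)
      (∑ q : PairIdx K, c q • (EuclideanSpace.proj q : GVec K →L[ℝ] ℝ)) w := by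
    apply HasFDerivAt.fun_sum
    intro q _
    exact HasFDerivAt.mul_const ((EuclideanSpace.proj (𝕜 := ℝ) q).hasFDerivAt (x := w)) (c q)
  have hB : HasFDerivAt (fun v : GVec K => ∑ q : PairIdx K, (v q) ^ 2)
      (∑ q : PairIdx K, (2 * w q) • (EuclideanSpace.proj q : GVec K →L[ℝ] ℝ)) w := by
    apply HasFDerivAt.fun_sum
    intro q _
    have hp := (EuclideanSpace.proj (𝕜 := ℝ) q).hasFDerivAt (x := w)
    have := hp.mul hp
    have h2 : HasFDerivAt (fun v : GVec K => (v q) ^ 2)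
        (w q • (EuclideanSpace.proj q : GVec K →L[ℝ] ℝ)
          + w q • (EuclideanSpace.proj q : GVec K →L[ℝ] ℝ)) w := by
      simp only [pow_two]; exact this
    rw [two_mul, add_smul]; exact h2
  have hC : HasFDerivAt (fun v : GVec K => ∑ m : Fin K, Real.log (deg v m + δ))
      (∑ m : Fin K, (deg w m + δ)⁻¹ • degL K m) w := by
    apply HasFDerivAt.fun_sum
    intro m _
    have h1 : HasFDerivAt (fun v : GVec K => degL K m v + δ) (degL K m) w :=
      (degL K m).hasFDerivAt.add_const δ
    have h2 := (Real.hasDerivAt_log (by rw [degL_apply]; exact hpos m)).comp_hasFDerivAt w h1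
    simp only [Function.comp_def, degL_apply] at h2 ⊢
    exact h2
  have hD : HasFDerivAt (hObj P Δ μ₁ μ₂ lam δ)
      ((∑ q : PairIdx K, c q • (EuclideanSpace.proj q : GVec K →L[ℝ] ℝ))
        + μ₂ • (lam • (∑ q : PairIdx K, (2 * w q) • (EuclideanSpace.proj q : GVec K →L[ℝ] ℝ))
          - ∑ m : Fin K, (deg w m + δ)⁻¹ • degL K m)) w := by
    exact hA.add (((hB.const_mul lam).sub hC).const_mul μ₂)
  rw [hasGradientAt_iff_hasFDerivAt]
  refine hD.congr_fderiv (Eq.symm ?_)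
  refine ContinuousLinearMap.ext fun v => ?_
  simp only [InnerProductSpace.toDual_apply_apply, PiLp.inner_apply, RCLike.inner_apply, starRingEnd_apply,
    star_trivial, ContinuousLinearMap.add_apply, ContinuousLinearMap.sum_apply,
    ContinuousLinearMap.smul_apply, ContinuousLinearMap.sub_apply, smul_eq_mul,
    degL_apply, gradVec]
  have proj_apply : ∀ (x : PairIdx K), (EuclideanSpace.proj (𝕜 := ℝ) x) v = v x := fun _ => rfl
  have key : ∑ m : Fin K, (deg w m + δ)⁻¹ * deg v m
      = ∑ x : PairIdx K,
          (∑ m : Fin K, if ((x : Fin K × Fin K).1 = m ∨ (x : Fin K × Fin K).2 = m)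
            then (deg w m + δ)⁻¹ else 0) * v x := by
    simp only [deg, Finset.mul_sum, mul_ite, mul_zero, Finset.sum_mul, ite_mul, zero_mul]
    rw [Finset.sum_comm]
  simp only [proj_apply]
  rw [key]
  simp only [Finset.mul_sum]
  rw [← Finset.sum_sub_distrib, Finset.mul_sum, ← Finset.sum_add_distrib]
  exact Finset.sum_congr rfl fun x _ => by ring

set_option maxHeartbeats 1000000 in
/-- Block-Lipschitz constant of the graph objective with the proposed
regularizer (Appendix C): with `μ₂ = μ₁`, for `w, w' ≥ 0` agreeing outside the block
`(k,𝒦)`, `‖[∇h(w)]_{k,𝒦} − [∇h(w')]_{k,𝒦}‖ ≤ μ₁((κ+1)/δ² + 2λ)‖w_{k,𝒦} − w'_{k,𝒦}‖`. -/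
theorem graph_objective_block_lipschitz
    (K : ℕ) (hK : 2 ≤ K)
    (P Δ : Fin K → Fin K → ℝ) (hP : ∀ k l, 0 ≤ P k l) (hΔ : ∀ k l, 0 ≤ Δ k l)
    (μ₁ lam δ : ℝ) (hμ₁ : 0 ≤ μ₁) (hlam : 0 < lam) (hδ : 0 < δ)
    (k : Fin K) (S : Finset (Fin K)) (hkS : k ∉ S) (κ : ℕ) (hcard : S.card = κ)
    (hκ : 1 ≤ κ)
    (w w' : GVec K) (hw : ∀ q, 0 ≤ w q) (hw' : ∀ q, 0 ≤ w' q)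
    (hagree : ∀ q, ¬ inBlk k S q → w q = w' q) :
    ‖blkRestr k S (gradient (hObj P Δ μ₁ μ₁ lam δ) w
        - gradient (hObj P Δ μ₁ μ₁ lam δ) w')‖
      ≤ μ₁ * (((κ : ℝ) + 1) / δ ^ 2 + 2 * lam) * ‖blkRestr k S (w - w')‖ := by
  have hposw : ∀ m : Fin K, deg w m + δ ≠ 0 := fun m => by
    have := deg_nonneg hw m; positivity
  have hposw' : ∀ m : Fin K, deg w' m + δ ≠ 0 := fun m => by
    have := deg_nonneg hw' m; positivity
  rw [(hasGradient_hObj P Δ μ₁ μ₁ lam δ w hposw).gradient,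
      (hasGradient_hObj P Δ μ₁ μ₁ lam δ w' hposw').gradient]
  set g : GVec K := gradVec P Δ μ₁ μ₁ lam δ w with hg
  set g' : GVec K := gradVec P Δ μ₁ μ₁ lam δ w' with hg'
  set u : GVec K := blkRestr k S (w - w') with hu
  have hsub : ∀ q : PairIdx K, (w - w') q = w q - w' q := fun _ => rfl
  have hq12 : ∀ q : PairIdx K, q.1.1 ≠ q.1.2 := fun q => ne_of_lt q.2
  set other : PairIdx K → Fin K := fun q => if q.1.1 = k then q.1.2 else q.1.1 with hother
  have hblk : ∀ q : PairIdx K, inBlk k S q →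
      other q ∈ S ∧ other q ≠ k ∧ (q.1.1 = k ∨ q.1.2 = k)
        ∧ (q.1.1 = other q ∨ q.1.2 = other q) := by
    intro q hq
    by_cases h : q.1.1 = k
    · have h2 : q.1.2 ∈ S := by
        rcases hq with ⟨_, h2⟩ | ⟨h2, _⟩
        · exact h2
        · exact absurd (h.trans h2.symm) (hq12 q)
      have ho : other q = q.1.2 := by simp only [hother, if_pos h]
      exact ⟨ho ▸ h2, fun hc => hkS ((ho ▸ hc) ▸ h2), Or.inl h, Or.inr ho.symm⟩
    · rcases hq with ⟨h1, _⟩ | ⟨h1, h2⟩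
      · exact absurd h1 h
      have ho : other q = q.1.1 := by simp only [hother, if_neg h]
      exact ⟨ho ▸ h2, fun hc => hkS ((ho ▸ hc) ▸ h2), Or.inr h1, Or.inl ho.symm⟩
  set Dm : Fin K → ℝ := fun m => (deg w m + δ)⁻¹ - (deg w' m + δ)⁻¹ with hDmdef
  have hDm : ∀ m : Fin K, |Dm m| ≤ |deg w m - deg w' m| / δ ^ 2 :=
    fun m => inv_diff_abs_le (deg_nonneg hw m) (deg_nonneg hw' m) hδ
  have degdiff : ∀ m : Fin K, deg w m - deg w' m
      = ∑ q : PairIdx K, (if q.1.1 = m ∨ q.1.2 = m then w q - w' q else 0) := by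
    intro m
    rw [deg, deg, ← Finset.sum_sub_distrib]
    exact Finset.sum_congr rfl fun q _ => by split <;> simp
  have degdiff_other : ∀ q : PairIdx K, inBlk k S q →
      deg w (other q) - deg w' (other q) = w q - w' q := by
    intro q hq
    obtain ⟨hS, hnk, htk, hto⟩ := hblk q hq
    rw [degdiff]
    rw [Finset.sum_eq_single q ?h0 ?h1]
    · rw [if_pos hto]
    case h0 =>
      intro q' _ hne
      by_cases ht : q'.1.1 = other q ∨ q'.1.2 = other q
      · rw [if_pos ht, sub_eq_zero]
        apply hagree
        intro hq'
        obtain ⟨_, _, htk', _⟩ := hblk q' hq'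
        exact hne (eq_of_touch hnk ht htk' hto htk)
      · rw [if_neg ht]
    case h1 => exact fun h => absurd (Finset.mem_univ q) h
  have degdiff_k : deg w k - deg w' k = ∑ q : PairIdx K, u q := by
    rw [degdiff]
    apply Finset.sum_congr rfl
    intro q _
    by_cases hb : inBlk k S q
    · obtain ⟨_, _, htk, _⟩ := hblk q hb
      rw [if_pos htk]
      simp only [hu, blkRestr, WithLp.ofLp_toLp, if_pos hb, hsub]
    · have h0 : u q = 0 := by simp only [hu, blkRestr, WithLp.ofLp_toLp, if_neg hb]
      rw [h0]
      by_cases ht : q.1.1 = k ∨ q.1.2 = k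
      · rw [if_pos ht, hagree q hb, sub_self]
      · rw [if_neg ht]
  -- the three pieces
  set X : GVec K := WithLp.toLp 2 (fun q => if inBlk k S q then μ₁ * (2 * lam * (w q - w' q)) else 0 :
    ∀ _ : PairIdx K, ℝ) with hX
  set Y : GVec K := WithLp.toLp 2 (fun q => if inBlk k S q then μ₁ * Dm k else 0 :
    ∀ _ : PairIdx K, ℝ) with hY
  set Z : GVec K := WithLp.toLp 2 (fun q => if inBlk k S q then μ₁ * Dm (other q) else 0 :
    ∀ _ : PairIdx K, ℝ) with hZ
  have hdecomp : blkRestr k S (g - g') = X - Y - Z := by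
    ext q
    show (if inBlk k S q then (g - g') q else 0) = X q - Y q - Z q
    by_cases hb : inBlk k S q
    · obtain ⟨hS, hnk, htk, hto⟩ := hblk q hb
      have hsum : ∀ v : GVec K,
          (∑ m : Fin K, if q.1.1 = m ∨ q.1.2 = m then (deg v m + δ)⁻¹ else 0)
            = (deg v q.1.1 + δ)⁻¹ + (deg v q.1.2 + δ)⁻¹ := fun v => sum_ite_pair (hq12 q) _
      have hpair : Dm q.1.1 + Dm q.1.2 = Dm k + Dm (other q) := by
        rcases htk with h | h
        · have ho : other q = q.1.2 := by simp only [hother, if_pos h]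
          rw [h, ho]
        · have hne : q.1.1 ≠ k := fun hc => hq12 q (hc.trans h.symm)
          have ho : other q = q.1.1 := by simp only [hother, if_neg hne]
          rw [h, ho, add_comm]
      have hgg : (g - g') q = μ₁ * (2 * lam * (w q - w' q)) - μ₁ * Dm k - μ₁ * Dm (other q) := by
        have : (g - g') q = g q - g' q := rfl
        rw [this, hg, hg']
        show ((P q.1.1 q.1.2 + μ₁ / 2 * Δ q.1.1 q.1.2)
            + μ₁ * (lam * (2 * w q)
              - ∑ m : Fin K, (if q.1.1 = m ∨ q.1.2 = m then (deg w m + δ)⁻¹ else 0)))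
          - ((P q.1.1 q.1.2 + μ₁ / 2 * Δ q.1.1 q.1.2)
            + μ₁ * (lam * (2 * w' q)
              - ∑ m : Fin K, (if q.1.1 = m ∨ q.1.2 = m then (deg w' m + δ)⁻¹ else 0))) = _
        rw [hsum w, hsum w']
        have : (deg w q.1.1 + δ)⁻¹ + (deg w q.1.2 + δ)⁻¹
            - ((deg w' q.1.1 + δ)⁻¹ + (deg w' q.1.2 + δ)⁻¹) = Dm k + Dm (other q) := by
          rw [← hpair, hDmdef]; ring
        linear_combination (-μ₁) * this
      rw [if_pos hb, hgg, hX, hY, hZ]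
      simp only [if_pos hb]
    · rw [if_neg hb, hX, hY, hZ]
      simp only [if_neg hb, sub_zero, sub_self]
  -- norms of the pieces
  have hsmul : ∀ (c : ℝ) (v : GVec K) (q : PairIdx K), (c • v) q = c * v q := fun _ _ _ => rfl
  have hXnorm : ‖X‖ = μ₁ * (2 * lam) * ‖u‖ := by
    have hXeq : X = (μ₁ * (2 * lam)) • u := by
      ext q
      rw [hsmul, hX, hu]
      show (if inBlk k S q then μ₁ * (2 * lam * (w q - w' q)) else 0) = _
      unfold blkRestr
      simp only [WithLp.ofLp_toLp]
      by_cases hb : inBlk k S q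
      · rw [if_pos hb, if_pos hb, hsub]; ring
      · rw [if_neg hb, if_neg hb, mul_zero]
    rw [hXeq, norm_smul, Real.norm_eq_abs, abs_of_nonneg (by positivity)]
  have hZnorm : ‖Z‖ ≤ μ₁ / δ ^ 2 * ‖u‖ := by
    have h1 : ‖Z‖ ≤ ‖(μ₁ / δ ^ 2) • u‖ := by
      apply norm_le_of_abs_le
      intro q
      rw [hsmul]
      by_cases hb : inBlk k S q
      · have hZq : Z q = μ₁ * Dm (other q) := by rw [hZ]; exact if_pos hb
        have huq : u q = w q - w' q := by
          rw [hu]; show (if inBlk k S q then (w - w') q else 0) = _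
          rw [if_pos hb, hsub]
        rw [hZq, huq, abs_mul, abs_mul, abs_of_nonneg hμ₁, abs_of_nonneg (by positivity : (0:ℝ) ≤ μ₁ / δ ^ 2)]
        have h2 := hDm (other q)
        rw [degdiff_other q hb] at h2
        calc μ₁ * |Dm (other q)| ≤ μ₁ * (|w q - w' q| / δ ^ 2) :=
              mul_le_mul_of_nonneg_left h2 hμ₁
          _ = μ₁ / δ ^ 2 * |w q - w' q| := by ring
      · have hZq : Z q = 0 := by rw [hZ]; exact if_neg hb
        rw [hZq, abs_zero]
        exact abs_nonneg _
    rw [norm_smul, Real.norm_eq_abs, abs_of_nonneg (by positivity)] at h1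
    exact h1
  have hunormsq' : ∀ v : GVec K, ‖v‖ ^ 2 = ∑ q : PairIdx K, (v q) ^ 2 := by
    intro v
    rw [EuclideanSpace.norm_eq, Real.sq_sqrt (by positivity)]
    exact Finset.sum_congr rfl fun q _ => by rw [Real.norm_eq_abs, sq_abs]
  have hunormsq : ‖u‖ ^ 2 = ∑ q : PairIdx K, (u q) ^ 2 := hunormsq' u
  set B : Finset (PairIdx K) := Finset.univ.filter (inBlk k S) with hB
  have hcardB : (B.card : ℝ) ≤ (κ : ℝ) := by
    have : B.card ≤ S.card := by
      apply Finset.card_le_card_of_injOn other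
      · intro q hq
        exact (hblk q (Finset.mem_filter.mp hq).2).1
      · intro q hq q' hq' heq
        obtain ⟨_, hnk, htk, hto⟩ := hblk q (Finset.mem_filter.mp hq).2
        obtain ⟨_, _, htk', hto'⟩ := hblk q' (Finset.mem_filter.mp hq').2
        rw [← heq] at hto'
        exact eq_of_touch hnk hto htk hto' htk'
    exact Nat.cast_le.mpr (hcard ▸ this)
  have hYnorm : ‖Y‖ ≤ μ₁ * (κ : ℝ) / δ ^ 2 * ‖u‖ := by
    set s : ℝ := ∑ q ∈ B, (w q - w' q) with hs
    set n : ℝ := (B.card : ℝ) with hn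
    have hn0 : (0:ℝ) ≤ n := Nat.cast_nonneg _
    have hsum_u : ∑ q : PairIdx K, u q = s := by
      rw [hs, Finset.sum_filter]
      apply Finset.sum_congr rfl
      intro q _
      rw [hu]
      show (if inBlk k S q then (w - w') q else 0) = _
      by_cases hb : inBlk k S q
      · rw [if_pos hb, if_pos hb, hsub]
      · rw [if_neg hb, if_neg hb]
    have hsumsq : ∑ q ∈ B, (w q - w' q) ^ 2 = ‖u‖ ^ 2 := by
      rw [hunormsq, Finset.sum_filter]
      apply Finset.sum_congr rfl
      intro q _
      rw [hu]
      show _ = ((if inBlk k S q then (w - w') q else 0) : ℝ) ^ 2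
      by_cases hb : inBlk k S q
      · rw [if_pos hb, if_pos hb, hsub]
      · rw [if_neg hb, if_neg hb]
        norm_num
    have hCS : s ^ 2 ≤ n * ∑ q ∈ B, (w q - w' q) ^ 2 := by
      rw [hs, hn]
      exact sq_sum_le_card_mul_sum_sq
    have hcs' : s ^ 2 ≤ n * ‖u‖ ^ 2 := by rw [← hsumsq]; exact hCS
    have habs : |Dm k| ≤ |s| / δ ^ 2 := by
      have h := hDm k
      rw [degdiff_k, hsum_u] at h
      exact h
    have hd2 : (Dm k) ^ 2 ≤ s ^ 2 / δ ^ 4 := by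
      calc (Dm k) ^ 2 = |Dm k| ^ 2 := (sq_abs _).symm
        _ ≤ (|s| / δ ^ 2) ^ 2 := pow_le_pow_left₀ (abs_nonneg _) habs 2
        _ = s ^ 2 / δ ^ 4 := by rw [div_pow, sq_abs, ← pow_mul]
    have hY2 : ‖Y‖ ^ 2 = n * (μ₁ * Dm k) ^ 2 := by
      rw [hunormsq' Y]
      have : ∀ q : PairIdx K, (Y q) ^ 2 = if inBlk k S q then (μ₁ * Dm k) ^ 2 else 0 := by
        intro q
        simp only [hY]
        by_cases hb : inBlk k S q
        · rw [if_pos hb, if_pos hb]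
        · rw [if_neg hb, if_neg hb]
          norm_num
      rw [Finset.sum_congr rfl fun q _ => this q, ← Finset.sum_filter, ← hB,
        Finset.sum_const, nsmul_eq_mul, hn]
    have key : ‖Y‖ ^ 2 ≤ (μ₁ * (κ : ℝ) / δ ^ 2 * ‖u‖) ^ 2 := by
      calc ‖Y‖ ^ 2 = (n * μ₁ ^ 2) * (Dm k) ^ 2 := by rw [hY2]; ring
        _ ≤ (n * μ₁ ^ 2) * (s ^ 2 / δ ^ 4) :=
            mul_le_mul_of_nonneg_left hd2 (by positivity)
        _ = (μ₁ ^ 2 / δ ^ 4) * (n * s ^ 2) := by ring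
        _ ≤ (μ₁ ^ 2 / δ ^ 4) * (n * (n * ‖u‖ ^ 2)) := by
            apply mul_le_mul_of_nonneg_left _ (by positivity)
            exact mul_le_mul_of_nonneg_left hcs' hn0
        _ = (μ₁ ^ 2 * ‖u‖ ^ 2 / δ ^ 4) * (n * n) := by ring
        _ ≤ (μ₁ ^ 2 * ‖u‖ ^ 2 / δ ^ 4) * ((κ : ℝ) * (κ : ℝ)) := by
            apply mul_le_mul_of_nonneg_left _ (by positivity)
            exact mul_le_mul hcardB hcardB hn0 (Nat.cast_nonneg κ)
        _ = (μ₁ * (κ : ℝ) / δ ^ 2 * ‖u‖) ^ 2 := by ring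
    calc ‖Y‖ = Real.sqrt (‖Y‖ ^ 2) := (Real.sqrt_sq (norm_nonneg _)).symm
      _ ≤ Real.sqrt ((μ₁ * (κ : ℝ) / δ ^ 2 * ‖u‖) ^ 2) := Real.sqrt_le_sqrt key
      _ = μ₁ * (κ : ℝ) / δ ^ 2 * ‖u‖ := Real.sqrt_sq (by positivity)
  calc ‖blkRestr k S (g - g')‖ = ‖X - Y - Z‖ := by rw [hdecomp]
    _ ≤ ‖X‖ + ‖Y‖ + ‖Z‖ :=
        (norm_sub_le _ _).trans (add_le_add_left (norm_sub_le _ _) _)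
    _ ≤ μ₁ * (2 * lam) * ‖u‖ + μ₁ * (κ : ℝ) / δ ^ 2 * ‖u‖ + μ₁ / δ ^ 2 * ‖u‖ := by
        rw [hXnorm]; exact add_le_add (add_le_add le_rfl hYnorm) hZnorm
    _ = μ₁ * (((κ : ℝ) + 1) / δ ^ 2 + 2 * lam) * ‖u‖ := by
        field_simp; ring
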